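/- Assume both causality axioms: T(S₁ ∪ S₂) = T(S₁)·T(S₂) and T'_l(S₁ ∪ S₂) = T'_l(S₁)·T(S₂) + T(S₁)·T'_l(S₂) for all disjoint S₁, S₂ ⊆ I with x(S₁) ≥ x(S₂). Then the barred families factorize in reversed order: T̄'_l(S₁ ∪ S₂) = T̄'_l(S₂)·T̄(S₁) + T̄(S₂)·T̄'_l(S₁) for all disjoint S₁, S₂ with x(S₁) ≥ x(S₂). -/

import Mathlib

/-- The Minkowski quadratic form on `ℝ⁴`. -/
def minkQ (x : Fin 4 → ℝ) : ℝ := x 0 ^ 2 - x 1 ^ 2 - x 2 ^ 2 - x 3 ^ 2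

/-- The open backward light cone `V⁻`. -/
def Vminus : Set (Fin 4 → ℝ) := {x | 0 < minkQ x ∧ x 0 < 0}

/-- Sum over all ordered partitions of `X` into `r ≥ 1` nonempty pairwise disjoint blocks
`X₁, …, X_r` of `(-1)^r * T X₁ * ⋯ * T X_r` (with value `1` for `X = ∅`), computed by peeling
off the first block. -/
def opSum {A : Type*} [Ring A] {ι : Type*} [DecidableEq ι]
    (T : Finset ι → A) (X : Finset ι) : A :=
  if _hX : X = ∅ then 1
  else
    ∑ Y ∈ (X.powerset.filter (fun Y => Y ≠ ∅)).attach,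
      (-1 : A) * T Y.1 * opSum T (X \ Y.1)
termination_by X.card
decreasing_by
  have hY := Y.2
  simp only [Finset.mem_filter, Finset.mem_powerset] at hY
  have h1 : Y.1.card ≤ X.card := Finset.card_le_card hY.1
  have h2 : 0 < Y.1.card := Finset.card_pos.mpr (Finset.nonempty_iff_ne_empty.mpr hY.2)
  rw [Finset.card_sdiff, Finset.inter_eq_left.mpr hY.1]
  omega

/-- The antichronological products `T̄`, defined by `T̄(∅) = 1` and
`(−1)^{|X|} T̄(X) = Σ_{r=1}^{|X|} (−1)^r Σ T(X₁)⋯T(X_r)`, the inner sum running over all ordered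
partitions of `X` into `r` nonempty pairwise disjoint subsets. -/
def chronoBar {A : Type*} [Ring A] {ι : Type*} [DecidableEq ι]
    (T : Finset ι → A) (X : Finset ι) : A :=
  (-1 : A) ^ X.card * opSum T X

/-- Sum over all ordered partitions of `X` into `r ≥ 1` nonempty pairwise disjoint blocks of
`(-1)^r * T X₁ ⋯ T' X_k ⋯ T X_r`, with `T'` replacing `T` in exactly one block (value `0` for
`X = ∅`), computed by peeling off the first block. -/
def opSumD {A : Type*} [Ring A] {ι : Type*} [DecidableEq ι]
    (T T' : Finset ι → A) (X : Finset ι) : A :=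
  if _hX : X = ∅ then 0
  else
    ∑ Y ∈ (X.powerset.filter (fun Y => Y ≠ ∅)).attach,
      (-1 : A) * (T' Y.1 * opSum T (X \ Y.1) + T Y.1 * opSumD T T' (X \ Y.1))
termination_by X.card
decreasing_by
  have hY := Y.2
  simp only [Finset.mem_filter, Finset.mem_powerset] at hY
  have h1 : Y.1.card ≤ X.card := Finset.card_le_card hY.1
  have h2 : 0 < Y.1.card := Finset.card_pos.mpr (Finset.nonempty_iff_ne_empty.mpr hY.2)
  rw [Finset.card_sdiff, Finset.inter_eq_left.mpr hY.1]
  omega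

/-- The barred family `T̄'`, defined by `T̄'(∅) = 0` and
`(−1)^{|X|} T̄'(X) = Σ_{r=1}^{|X|} (−1)^r Σ Σ_{k=1}^{r} T(X₁)⋯T'(X_k)⋯T(X_r)`, the inner sum over
ordered partitions of `X` into `r` nonempty pairwise disjoint blocks, with `T'` replacing `T`
in exactly one block. -/
def chronoBarD {A : Type*} [Ring A] {ι : Type*} [DecidableEq ι]
    (T T' : Finset ι → A) (X : Finset ι) : A :=
  (-1 : A) ^ X.card * opSumD T T' X

section AuxEG
variable {A : Type*} [Ring A] {ι : Type*} [DecidableEq ι]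

lemma opSum_empty (T : Finset ι → A) : opSum T ∅ = 1 := by rw [opSum]; simp

lemma opSumD_empty (T T' : Finset ι → A) : opSumD T T' ∅ = 0 := by rw [opSumD]; simp

lemma opSum_eq (T : Finset ι → A) {X : Finset ι} (hX : X ≠ ∅) :
    opSum T X = ∑ Y ∈ X.powerset.filter (fun Y => Y ≠ ∅), (-1 : A) * T Y * opSum T (X \ Y) := by
  rw [opSum, dif_neg hX]
  exact Finset.sum_attach _ (fun Y => (-1 : A) * T Y * opSum T (X \ Y))

lemma opSumD_eq (T T' : Finset ι → A) {X : Finset ι} (hX : X ≠ ∅) :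
    opSumD T T' X = ∑ Y ∈ X.powerset.filter (fun Y => Y ≠ ∅),
      (-1 : A) * (T' Y * opSum T (X \ Y) + T Y * opSumD T T' (X \ Y)) := by
  rw [opSumD, dif_neg hX]
  exact Finset.sum_attach _ (fun Y => (-1 : A) * (T' Y * opSum T (X \ Y) + T Y * opSumD T T' (X \ Y)))

lemma powerset_eq_insert (X : Finset ι) :
    X.powerset = insert ∅ (X.powerset.filter (fun Y => Y ≠ ∅)) := by
  ext Y
  simp only [Finset.mem_insert, Finset.mem_filter, Finset.mem_powerset]
  by_cases h : Y = ∅ <;> simp [h]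

lemma conv_opSum (T : Finset ι → A) (hT1 : T ∅ = 1) (X : Finset ι) :
    ∑ Y ∈ X.powerset, T Y * opSum T (X \ Y) = if X = ∅ then 1 else 0 := by
  by_cases hX : X = ∅
  · subst hX; simp [opSum_empty, hT1]
  · rw [if_neg hX, powerset_eq_insert, Finset.sum_insert (by simp), hT1, one_mul,
      Finset.sdiff_empty]
    have : ∑ Y ∈ X.powerset.filter (fun Y => Y ≠ ∅), T Y * opSum T (X \ Y) = -opSum T X := by
      rw [opSum_eq T hX, ← Finset.sum_neg_distrib]
      exact Finset.sum_congr rfl fun Y _ => by simp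
    rw [this, add_neg_cancel]

lemma conv_opSumD (T T' : Finset ι → A) (hT1 : T ∅ = 1) (hT'0 : T' ∅ = 0) (X : Finset ι) :
    ∑ Y ∈ X.powerset, (T' Y * opSum T (X \ Y) + T Y * opSumD T T' (X \ Y)) = 0 := by
  by_cases hX : X = ∅
  · subst hX; simp [opSum_empty, opSumD_empty, hT1, hT'0]
  · rw [powerset_eq_insert, Finset.sum_insert (by simp), hT1, hT'0, one_mul, zero_mul,
      Finset.sdiff_empty, zero_add]
    have : ∑ Y ∈ X.powerset.filter (fun Y => Y ≠ ∅),
        (T' Y * opSum T (X \ Y) + T Y * opSumD T T' (X \ Y)) = -opSumD T T' X := by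
      rw [opSumD_eq T T' hX, ← Finset.sum_neg_distrib]
      exact Finset.sum_congr rfl fun Y _ => by simp
    rw [this, add_neg_cancel]

lemma sum_powerset_union {M : Type*} [AddCommMonoid M] {S₁ S₂ : Finset ι}
    (hd : Disjoint S₁ S₂) (f : Finset ι → M) :
    ∑ Y ∈ (S₁ ∪ S₂).powerset, f Y = ∑ p ∈ S₁.powerset ×ˢ S₂.powerset, f (p.1 ∪ p.2) := by
  refine Finset.sum_nbij' (fun Y => (Y ∩ S₁, Y ∩ S₂)) (fun p => p.1 ∪ p.2) ?_ ?_ ?_ ?_ ?_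
  · intro Y hY
    simp [Finset.mem_product, Finset.inter_subset_right]
  · intro p hp
    simp only [Finset.mem_product, Finset.mem_powerset] at hp
    exact Finset.mem_powerset.mpr (Finset.union_subset_union hp.1 hp.2)
  · intro Y hY
    simp only [Finset.mem_powerset] at hY
    show Y ∩ S₁ ∪ Y ∩ S₂ = Y
    rw [← Finset.inter_union_distrib_left, Finset.inter_eq_left.mpr hY]
  · intro p hp
    simp only [Finset.mem_product, Finset.mem_powerset] at hp
    have h1 : (p.1 ∪ p.2) ∩ S₁ = p.1 := by
      rw [Finset.union_inter_distrib_right, Finset.inter_eq_left.mpr hp.1,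
        Finset.disjoint_iff_inter_eq_empty.mp (hd.symm.mono_left hp.2), Finset.union_empty]
    have h2 : (p.1 ∪ p.2) ∩ S₂ = p.2 := by
      rw [Finset.union_inter_distrib_right, Finset.inter_eq_left.mpr hp.2,
        Finset.disjoint_iff_inter_eq_empty.mp (hd.mono_left hp.1), Finset.empty_union]
    exact Prod.ext h1 h2
  · intro Y hY
    simp only [Finset.mem_powerset] at hY
    show f Y = f (Y ∩ S₁ ∪ Y ∩ S₂)
    rw [← Finset.inter_union_distrib_left, Finset.inter_eq_left.mpr hY]



lemma sdiff_union_sdiff {S₁ S₂ Y₁ Y₂ : Finset ι} (hd : Disjoint S₁ S₂)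
    (h1 : Y₁ ⊆ S₁) (h2 : Y₂ ⊆ S₂) :
    (S₁ ∪ S₂) \ (Y₁ ∪ Y₂) = (S₁ \ Y₁) ∪ (S₂ \ Y₂) := by
  ext a
  simp only [Finset.mem_sdiff, Finset.mem_union, not_or]
  constructor
  · rintro ⟨h | h, hn⟩
    · exact Or.inl ⟨h, hn.1⟩
    · exact Or.inr ⟨h, hn.2⟩
  · rintro (⟨h, hn⟩ | ⟨h, hn⟩)
    · exact ⟨Or.inl h, hn, fun hh => Finset.disjoint_left.mp hd h (h2 hh)⟩
    · exact ⟨Or.inr h, fun hh => Finset.disjoint_left.mp hd (h1 hh) h, hn⟩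

variable (x : ι → Fin 4 → ℝ)

lemma opSum_union (T : Finset ι → A) (hT1 : T ∅ = 1)
    (hcausT : ∀ S₁ S₂ : Finset ι, Disjoint S₁ S₂ →
      (∀ i ∈ S₁, ∀ j ∈ S₂, x i - x j ∉ closure Vminus) → T (S₁ ∪ S₂) = T S₁ * T S₂) :
    ∀ (n : ℕ) (S₁ S₂ : Finset ι), Disjoint S₁ S₂ →
      (∀ i ∈ S₁, ∀ j ∈ S₂, x i - x j ∉ closure Vminus) → (S₁ ∪ S₂).card ≤ n →
      opSum T (S₁ ∪ S₂) = opSum T S₂ * opSum T S₁ := by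
  intro n
  induction n with
  | zero =>
    intro S₁ S₂ _ _ hcard
    obtain ⟨h1, h2⟩ := Finset.union_eq_empty.mp (Finset.card_eq_zero.mp (Nat.le_zero.mp hcard))
    subst h1; subst h2; simp [opSum_empty]
  | succ n ih =>
    intro S₁ S₂ hd hx hcard
    by_cases hX : S₁ ∪ S₂ = ∅
    · obtain ⟨h1, h2⟩ := Finset.union_eq_empty.mp hX
      subst h1; subst h2; simp [opSum_empty]
    have hSF : ∑ p ∈ S₁.powerset ×ˢ S₂.powerset,
        T (p.1 ∪ p.2) * opSum T ((S₁ ∪ S₂) \ (p.1 ∪ p.2)) = 0 :=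
      ((sum_powerset_union hd (fun Y => T Y * opSum T ((S₁ ∪ S₂) \ Y))).symm.trans
        (conv_opSum T hT1 (S₁ ∪ S₂))).trans (if_neg hX)
    have hinner : ∀ Y₁ : Finset ι,
        ∑ Y₂ ∈ S₂.powerset, T Y₁ * (T Y₂ * opSum T (S₂ \ Y₂)) * opSum T (S₁ \ Y₁)
          = (if S₂ = ∅ then (1 : A) else 0) * (T Y₁ * opSum T (S₁ \ Y₁)) := by
      intro Y₁
      rw [← Finset.sum_mul, ← Finset.mul_sum, conv_opSum T hT1 S₂]
      by_cases h2 : S₂ = ∅ <;> simp [h2, mul_assoc]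
    have hSh : ∑ p ∈ S₁.powerset ×ˢ S₂.powerset,
        T p.1 * (T p.2 * opSum T (S₂ \ p.2)) * opSum T (S₁ \ p.1) = 0 := by
      rw [Finset.sum_product]
      rw [Finset.sum_congr rfl (fun Y₁ _ => hinner Y₁), ← Finset.mul_sum,
        conv_opSum T hT1 S₁]
      by_cases h1 : S₁ = ∅ <;> by_cases h2 : S₂ = ∅ <;> simp [h1, h2] <;>
        exact absurd (by simp [h1, h2]) hX
    have hdiff : ∑ p ∈ S₁.powerset ×ˢ S₂.powerset,
        (T (p.1 ∪ p.2) * opSum T ((S₁ ∪ S₂) \ (p.1 ∪ p.2))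
          - T p.1 * (T p.2 * opSum T (S₂ \ p.2)) * opSum T (S₁ \ p.1))
        = T ((∅ : Finset ι) ∪ ∅) * opSum T ((S₁ ∪ S₂) \ ((∅ : Finset ι) ∪ ∅))
          - T ∅ * (T ∅ * opSum T (S₂ \ ∅)) * opSum T (S₁ \ ∅) := by
      refine Finset.sum_eq_single_of_mem (∅, ∅) (by simp) ?_
      intro p hp hne
      simp only [Finset.mem_product, Finset.mem_powerset] at hp
      obtain ⟨hp1, hp2⟩ := hp
      have hdp : Disjoint p.1 p.2 := hd.mono hp1 hp2
      have hxp : ∀ i ∈ p.1, ∀ j ∈ p.2, x i - x j ∉ closure Vminus :=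
        fun i hi j hj => hx i (hp1 hi) j (hp2 hj)
      have hne' : p.1 ∪ p.2 ≠ ∅ := by
        intro h
        obtain ⟨e1, e2⟩ := Finset.union_eq_empty.mp h
        exact hne (Prod.ext e1 e2)
      have hsub : p.1 ∪ p.2 ⊆ S₁ ∪ S₂ := Finset.union_subset_union hp1 hp2
      have hcard' : ((S₁ \ p.1) ∪ (S₂ \ p.2)).card ≤ n := by
        rw [← sdiff_union_sdiff hd hp1 hp2, Finset.card_sdiff, Finset.inter_eq_left.mpr hsub]
        have : 0 < (p.1 ∪ p.2).card :=
          Finset.card_pos.mpr (Finset.nonempty_iff_ne_empty.mpr hne')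
        omega
      have hds : Disjoint (S₁ \ p.1) (S₂ \ p.2) :=
        hd.mono Finset.sdiff_subset Finset.sdiff_subset
      have hxs : ∀ i ∈ S₁ \ p.1, ∀ j ∈ S₂ \ p.2, x i - x j ∉ closure Vminus :=
        fun i hi j hj => hx i (Finset.mem_sdiff.mp hi).1 j (Finset.mem_sdiff.mp hj).1
      rw [hcausT p.1 p.2 hdp hxp, sdiff_union_sdiff hd hp1 hp2, ih _ _ hds hxs hcard']
      noncomm_ring
    rw [Finset.sum_sub_distrib, hSF, hSh, sub_zero] at hdiff
    simp only [Finset.union_empty, Finset.sdiff_empty, hT1, one_mul] at hdiff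
    exact sub_eq_zero.mp hdiff.symm

lemma opSumD_union (T T' : Finset ι → A) (hT1 : T ∅ = 1) (hT'0 : T' ∅ = 0)
    (hcausT : ∀ S₁ S₂ : Finset ι, Disjoint S₁ S₂ →
      (∀ i ∈ S₁, ∀ j ∈ S₂, x i - x j ∉ closure Vminus) → T (S₁ ∪ S₂) = T S₁ * T S₂)
    (hcausT' : ∀ S₁ S₂ : Finset ι, Disjoint S₁ S₂ →
      (∀ i ∈ S₁, ∀ j ∈ S₂, x i - x j ∉ closure Vminus) →
        T' (S₁ ∪ S₂) = T' S₁ * T S₂ + T S₁ * T' S₂) :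
    ∀ (n : ℕ) (S₁ S₂ : Finset ι), Disjoint S₁ S₂ →
      (∀ i ∈ S₁, ∀ j ∈ S₂, x i - x j ∉ closure Vminus) → (S₁ ∪ S₂).card ≤ n →
      opSumD T T' (S₁ ∪ S₂)
        = opSumD T T' S₂ * opSum T S₁ + opSum T S₂ * opSumD T T' S₁ := by
  intro n
  induction n with
  | zero =>
    intro S₁ S₂ _ _ hcard
    obtain ⟨h1, h2⟩ := Finset.union_eq_empty.mp (Finset.card_eq_zero.mp (Nat.le_zero.mp hcard))
    subst h1; subst h2; simp [opSum_empty, opSumD_empty]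
  | succ n ih =>
    intro S₁ S₂ hd hx hcard
    by_cases hX : S₁ ∪ S₂ = ∅
    · obtain ⟨h1, h2⟩ := Finset.union_eq_empty.mp hX
      subst h1; subst h2; simp [opSum_empty, opSumD_empty]
    have hSF : ∑ p ∈ S₁.powerset ×ˢ S₂.powerset,
        (T' (p.1 ∪ p.2) * opSum T ((S₁ ∪ S₂) \ (p.1 ∪ p.2))
          + T (p.1 ∪ p.2) * opSumD T T' ((S₁ ∪ S₂) \ (p.1 ∪ p.2))) = 0 :=
      (sum_powerset_union hd
        (fun Y => T' Y * opSum T ((S₁ ∪ S₂) \ Y)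
          + T Y * opSumD T T' ((S₁ ∪ S₂) \ Y))).symm.trans
        (conv_opSumD T T' hT1 hT'0 (S₁ ∪ S₂))
    have hinner : ∀ Y₁ : Finset ι,
        ∑ Y₂ ∈ S₂.powerset,
          (T' Y₁ * (T Y₂ * opSum T (S₂ \ Y₂)) * opSum T (S₁ \ Y₁)
            + T Y₁ * (T' Y₂ * opSum T (S₂ \ Y₂) + T Y₂ * opSumD T T' (S₂ \ Y₂))
                * opSum T (S₁ \ Y₁)
            + T Y₁ * (T Y₂ * opSum T (S₂ \ Y₂)) * opSumD T T' (S₁ \ Y₁))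
          = (if S₂ = ∅ then (1 : A) else 0)
              * (T' Y₁ * opSum T (S₁ \ Y₁) + T Y₁ * opSumD T T' (S₁ \ Y₁)) := by
      intro Y₁
      rw [Finset.sum_add_distrib, Finset.sum_add_distrib]
      have e1 : ∑ Y₂ ∈ S₂.powerset, T' Y₁ * (T Y₂ * opSum T (S₂ \ Y₂)) * opSum T (S₁ \ Y₁)
          = T' Y₁ * (if S₂ = ∅ then (1 : A) else 0) * opSum T (S₁ \ Y₁) := by
        rw [← Finset.sum_mul, ← Finset.mul_sum, conv_opSum T hT1 S₂]
      have e2 : ∑ Y₂ ∈ S₂.powerset,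
          T Y₁ * (T' Y₂ * opSum T (S₂ \ Y₂) + T Y₂ * opSumD T T' (S₂ \ Y₂))
            * opSum T (S₁ \ Y₁) = 0 := by
        rw [← Finset.sum_mul, ← Finset.mul_sum, conv_opSumD T T' hT1 hT'0 S₂]
        simp
      have e3 : ∑ Y₂ ∈ S₂.powerset, T Y₁ * (T Y₂ * opSum T (S₂ \ Y₂)) * opSumD T T' (S₁ \ Y₁)
          = T Y₁ * (if S₂ = ∅ then (1 : A) else 0) * opSumD T T' (S₁ \ Y₁) := by
        rw [← Finset.sum_mul, ← Finset.mul_sum, conv_opSum T hT1 S₂]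
      rw [e1, e2, e3]
      by_cases h2 : S₂ = ∅ <;> simp [h2, mul_add, mul_assoc]
    have hSh : ∑ p ∈ S₁.powerset ×ˢ S₂.powerset,
        (T' p.1 * (T p.2 * opSum T (S₂ \ p.2)) * opSum T (S₁ \ p.1)
          + T p.1 * (T' p.2 * opSum T (S₂ \ p.2) + T p.2 * opSumD T T' (S₂ \ p.2))
              * opSum T (S₁ \ p.1)
          + T p.1 * (T p.2 * opSum T (S₂ \ p.2)) * opSumD T T' (S₁ \ p.1)) = 0 := by
      rw [Finset.sum_product]
      rw [Finset.sum_congr rfl (fun Y₁ _ => hinner Y₁), ← Finset.mul_sum,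
        conv_opSumD T T' hT1 hT'0 S₁, mul_zero]
    have hdiff : ∑ p ∈ S₁.powerset ×ˢ S₂.powerset,
        ((T' (p.1 ∪ p.2) * opSum T ((S₁ ∪ S₂) \ (p.1 ∪ p.2))
            + T (p.1 ∪ p.2) * opSumD T T' ((S₁ ∪ S₂) \ (p.1 ∪ p.2)))
          - (T' p.1 * (T p.2 * opSum T (S₂ \ p.2)) * opSum T (S₁ \ p.1)
            + T p.1 * (T' p.2 * opSum T (S₂ \ p.2) + T p.2 * opSumD T T' (S₂ \ p.2))
                * opSum T (S₁ \ p.1)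
            + T p.1 * (T p.2 * opSum T (S₂ \ p.2)) * opSumD T T' (S₁ \ p.1)))
        = ((T' ((∅ : Finset ι) ∪ ∅) * opSum T ((S₁ ∪ S₂) \ ((∅ : Finset ι) ∪ ∅))
            + T ((∅ : Finset ι) ∪ ∅) * opSumD T T' ((S₁ ∪ S₂) \ ((∅ : Finset ι) ∪ ∅)))
          - (T' ∅ * (T ∅ * opSum T (S₂ \ ∅)) * opSum T (S₁ \ ∅)
            + T ∅ * (T' ∅ * opSum T (S₂ \ ∅) + T ∅ * opSumD T T' (S₂ \ ∅))
                * opSum T (S₁ \ ∅)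
            + T ∅ * (T ∅ * opSum T (S₂ \ ∅)) * opSumD T T' (S₁ \ ∅))) := by
      refine Finset.sum_eq_single_of_mem (∅, ∅) (by simp) ?_
      intro p hp hne
      simp only [Finset.mem_product, Finset.mem_powerset] at hp
      obtain ⟨hp1, hp2⟩ := hp
      have hdp : Disjoint p.1 p.2 := hd.mono hp1 hp2
      have hxp : ∀ i ∈ p.1, ∀ j ∈ p.2, x i - x j ∉ closure Vminus :=
        fun i hi j hj => hx i (hp1 hi) j (hp2 hj)
      have hne' : p.1 ∪ p.2 ≠ ∅ := by
        intro h
        obtain ⟨e1, e2⟩ := Finset.union_eq_empty.mp h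
        exact hne (Prod.ext e1 e2)
      have hsub : p.1 ∪ p.2 ⊆ S₁ ∪ S₂ := Finset.union_subset_union hp1 hp2
      have hcard' : ((S₁ \ p.1) ∪ (S₂ \ p.2)).card ≤ n := by
        rw [← sdiff_union_sdiff hd hp1 hp2, Finset.card_sdiff, Finset.inter_eq_left.mpr hsub]
        have : 0 < (p.1 ∪ p.2).card :=
          Finset.card_pos.mpr (Finset.nonempty_iff_ne_empty.mpr hne')
        omega
      have hds : Disjoint (S₁ \ p.1) (S₂ \ p.2) :=
        hd.mono Finset.sdiff_subset Finset.sdiff_subset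
      have hxs : ∀ i ∈ S₁ \ p.1, ∀ j ∈ S₂ \ p.2, x i - x j ∉ closure Vminus :=
        fun i hi j hj => hx i (Finset.mem_sdiff.mp hi).1 j (Finset.mem_sdiff.mp hj).1
      rw [hcausT p.1 p.2 hdp hxp, hcausT' p.1 p.2 hdp hxp,
        sdiff_union_sdiff hd hp1 hp2,
        opSum_union x T hT1 hcausT ((S₁ \ p.1) ∪ (S₂ \ p.2)).card _ _ hds hxs le_rfl,
        ih _ _ hds hxs hcard']
      noncomm_ring
    rw [Finset.sum_sub_distrib, hSF, hSh, sub_zero] at hdiff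
    simp only [Finset.union_empty, Finset.sdiff_empty, hT1, hT'0, one_mul, zero_mul,
      mul_zero, zero_add, add_zero, mul_one] at hdiff
    exact sub_eq_zero.mp hdiff.symm

end AuxEG

/-- If the chronological products `T` and the derived families `T'_l` satisfy the two causality
axioms, then the barred families factorize in reversed order:
`T̄'_l(S₁ ∪ S₂) = T̄'_l(S₂)·T̄(S₁) + T̄(S₂)·T̄'_l(S₁)` whenever `S₁, S₂` are disjoint and
`x(S₁) ≥ x(S₂)`. -/
theorem antichrono_derived_reverse_causality {A : Type*} [Ring A]
    {ι : Type*} [Fintype ι] [DecidableEq ι]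
    (x : ι → Fin 4 → ℝ) (T : Finset ι → A) (hT1 : T ∅ = 1)
    (T' : ι → Finset ι → A) (hT'0 : ∀ l, ∀ X : Finset ι, l ∉ X → T' l X = 0)
    (hcausT : ∀ S₁ S₂ : Finset ι, Disjoint S₁ S₂ →
      (∀ i ∈ S₁, ∀ j ∈ S₂, x i - x j ∉ closure Vminus) → T (S₁ ∪ S₂) = T S₁ * T S₂)
    (hcausT' : ∀ l, ∀ S₁ S₂ : Finset ι, Disjoint S₁ S₂ →
      (∀ i ∈ S₁, ∀ j ∈ S₂, x i - x j ∉ closure Vminus) →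
        T' l (S₁ ∪ S₂) = T' l S₁ * T S₂ + T S₁ * T' l S₂)
    (l : ι) (S₁ S₂ : Finset ι) (hd : Disjoint S₁ S₂)
    (hx : ∀ i ∈ S₁, ∀ j ∈ S₂, x i - x j ∉ closure Vminus) :
    chronoBarD T (T' l) (S₁ ∪ S₂) =
      chronoBarD T (T' l) S₂ * chronoBar T S₁ + chronoBar T S₂ * chronoBarD T (T' l) S₁ := by
  have hm := opSumD_union x T (T' l) hT1 (hT'0 l ∅ (by simp)) hcausT (hcausT' l)
    (S₁ ∪ S₂).card S₁ S₂ hd hx le_rfl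
  have hcard : (S₁ ∪ S₂).card = S₁.card + S₂.card := Finset.card_union_of_disjoint hd
  simp only [chronoBarD, chronoBar]
  rw [hm, hcard, pow_add]
  rcases Nat.even_or_odd S₁.card with h1 | h1 <;>
    rcases Nat.even_or_odd S₂.card with h2 | h2 <;>
      simp only [h1.neg_one_pow, h2.neg_one_pow, one_mul, mul_one, neg_mul, mul_neg,
        neg_neg, neg_add_rev] <;> first | rfl | exact add_comm _ _
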